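/- arXiv:2011.13589 — 3 statements merged into one kernel-verified Lean document; each statement's English description precedes it below -/
import Mathlib

section
/- Let C be a right Markov code for (X_A, σ_A) and suppose X_A contains a fixed point a^∞ = (a,a,a,...). Then the constant word a^m (m copies of a) belongs to C if and only if m = 1. -/
namespace TMS

/-- A `{0,1}` transition matrix on `N` symbols, as a `Bool`-valued function. -/
abbrev Mat (N : ℕ) := Fin N → Fin N → Bool

/-- A finite word is (locally) admissible: all consecutive transitions are allowed. -/
def Adm {N : ℕ} (A : Mat N) (w : List (Fin N)) : Prop :=
  List.Chain' (fun a b => A a b = true) w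

instance {N : ℕ} (A : Mat N) (w : List (Fin N)) : Decidable (Adm A w) :=
  inferInstanceAs (Decidable (List.IsChain (fun a b => A a b = true) w))

/-- The one-sided shift space `X_A`. -/
def SSpace {N : ℕ} (A : Mat N) : Set (ℕ → Fin N) :=
  {x | ∀ n, A (x n) (x (n + 1)) = true}

/-- The shift on sequences. -/
def shift {N : ℕ} (x : ℕ → Fin N) : ℕ → Fin N := fun n => x (n + 1)

/-- The shift as a self-map of the shift space. -/
def shiftS {N : ℕ} (A : Mat N) (x : ↥(SSpace A)) : ↥(SSpace A) :=
  ⟨shift x.1, fun n => x.2 (n + 1)⟩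

/-- `x` begins with the finite word `w`. -/
def Begins {N : ℕ} (x : ℕ → Fin N) (w : List (Fin N)) : Prop :=
  ∀ i (h : i < w.length), x i = w.get ⟨i, h⟩

/-- A word belongs to `B_*(X_A)`: it occurs at the beginning of some point of `X_A`. -/
def AdmX {N : ℕ} (A : Mat N) (w : List (Fin N)) : Prop :=
  ∃ x ∈ SSpace A, Begins x w

/-- The cylinder set `U_w ⊂ X_A`. -/
def Cyl {N : ℕ} (A : Mat N) (w : List (Fin N)) : Set (ℕ → Fin N) :=
  {x ∈ SSpace A | Begins x w}

/-- A finite family of words is a prefix code: the words are pairwise distinct and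
no word is an initial segment of another. -/
def IsPrefixCode {N M : ℕ} (ω : Fin M → List (Fin N)) : Prop :=
  Function.Injective ω ∧ ∀ i j : Fin M, i ≠ j → ¬ (ω i <+: ω j)

/-- Starting position of the `n`-th block in the factorization of a point along
the index sequence `f`. -/
def pos {N M : ℕ} (ω : Fin M → List (Fin N)) (f : ℕ → Fin M) : ℕ → ℕ
  | 0 => 0
  | n + 1 => pos ω f n + (ω (f n)).length

/-- The point `x` factors as the infinite concatenation `ω (f 0) ω (f 1) ⋯`. -/
def Factors {N M : ℕ} (ω : Fin M → List (Fin N)) (x : ℕ → Fin N) (f : ℕ → Fin M) : Prop :=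
  ∀ n, Begins (fun k => x (pos ω f n + k)) (ω (f n))

/-- Matrix irreducibility: from any symbol there is an admissible path to any other. -/
def IrreducibleMat {N : ℕ} (A : Mat N) : Prop :=
  ∀ i j : Fin N, ∃ w : List (Fin N), Adm A (i :: (w ++ [j]))

/-- Permutation matrix: every row and every column has exactly one nonzero entry. -/
def IsPermMat {N : ℕ} (A : Mat N) : Prop :=
  (∀ i, ∃! j, A i j = true) ∧ (∀ j, ∃! i, A i j = true)

/-- A right Markov code for `(X_A, σ_A)`: a prefix code of nonempty admissible words
with the unique factorization property, shift invariance, and irreducibility. -/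
structure IsRightMarkovCode {N M : ℕ} (A : Mat N) (ω : Fin M → List (Fin N)) : Prop where
  adm : ∀ i, AdmX A (ω i)
  ne : ∀ i, ω i ≠ []
  prefixCode : IsPrefixCode ω
  uniqueFact : ∀ γ, AdmX A γ → ∃ η, AdmX A (γ ++ η) ∧
      ∃! l : List (Fin M), γ ++ η = (l.map ω).flatten
  shiftInv : ∃ L : ℕ, 0 < L ∧ ∀ l : List (Fin M), l.length = L → AdmX A ((l.map ω).flatten) →
      ∃ l' : List (Fin M), ((l.map ω).flatten).tail = (l'.map ω).flatten
  irr : ∀ i j, ∃ l : List (Fin M), AdmX A (ω i ++ (l.map ω).flatten ++ ω j)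

/-- The induced matrix `A(C)`: `A(C)(i,j) = 1` iff `ω i ω j` is admissible. -/
def matC {N M : ℕ} (A : Mat N) (ω : Fin M → List (Fin N)) : Mat M :=
  fun i j => decide (Adm A (ω i ++ ω j))

/-- Continuous orbit equivalence of one-sided topological Markov shifts. -/
def COE {N N' : ℕ} (A : Mat N) (B : Mat N') : Prop :=
  ∃ h : ↥(SSpace A) ≃ₜ ↥(SSpace B),
    (∃ k₁ l₁ : ↥(SSpace A) → ℕ, Continuous k₁ ∧ Continuous l₁ ∧
      ∀ x, (shiftS B)^[k₁ x] (h (shiftS A x)) = (shiftS B)^[l₁ x] (h x)) ∧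
    (∃ k₂ l₂ : ↥(SSpace B) → ℕ, Continuous k₂ ∧ Continuous l₂ ∧
      ∀ y, (shiftS A)^[k₂ y] (h.symm (shiftS B y)) = (shiftS A)^[l₂ y] (h.symm y))

lemma replicate_flatten {N : ℕ} (a : Fin N) (n m : ℕ) :
    (List.replicate n (List.replicate m a)).flatten = List.replicate (n * m) a := by
  induction n with
  | zero => simp
  | succ n ih => simp [List.replicate_succ, ih, Nat.succ_mul, Nat.add_comm,
      ← List.replicate_add]

lemma begins_const_replicate {N : ℕ} (a : Fin N) (n : ℕ) :
    Begins (fun _ => a) (List.replicate n a) := by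
  intro i h
  simp [List.getElem_replicate]

lemma admX_replicate {N : ℕ} (A : Mat N) (a : Fin N) (ha : A a a = true) (n : ℕ) :
    AdmX A (List.replicate n a) :=
  ⟨fun _ => a, fun _ => ha, begins_const_replicate a n⟩

lemma eq_replicate_of_prefix_replicate {N : ℕ} {a : Fin N} {w : List (Fin N)} {n : ℕ}
    (h : w <+: List.replicate n a) : w = List.replicate w.length a := by
  refine List.eq_replicate_of_mem (fun x hx => ?_)
  exact List.eq_of_mem_replicate (h.subset hx)

lemma replicate_prefix_replicate {N : ℕ} (a : Fin N) {p q : ℕ} (h : p ≤ q) :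
    List.replicate p a <+: List.replicate q a :=
  ⟨List.replicate (q - p) a, by rw [← List.replicate_add]; congr 1; omega⟩

/-- Forward direction: a constant code word must have length 1. -/
lemma const_code_word_len_one {N M : ℕ} (A : Mat N)
    (ω : Fin M → List (Fin N)) (hC : IsRightMarkovCode A ω)
    (a : Fin N) (ha : A a a = true)
    (i : Fin M) (m : ℕ) (h : ω i = List.replicate m a) : m = 1 := by
  have hm0 : m ≠ 0 := by
    intro hm; exact hC.ne i (by simp [h, hm])
  by_contra hm1
  have hm2 : 2 ≤ m := by omega
  obtain ⟨L, hL, hshift⟩ := hC.shiftInv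
  set l : List (Fin M) := List.replicate L i with hl
  have hflat : (l.map ω).flatten = List.replicate (L * m) a := by
    rw [hl, List.map_replicate, h, replicate_flatten]
  have hlen : l.length = L := by simp [hl]
  have hadm : AdmX A ((l.map ω).flatten) := by
    rw [hflat]; exact admX_replicate A a ha _
  obtain ⟨l', hl'⟩ := hshift l hlen hadm
  have htail : (l'.map ω).flatten = List.replicate (L * m - 1) a := by
    rw [← hl', hflat, List.tail_replicate]
  -- every code word appearing in l' equals ω i
  have hall : ∀ j ∈ l', ω j = ω i := by
    intro j hj
    have hsub : List.Sublist (ω j) (l'.map ω).flatten :=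
      List.sublist_flatten_of_mem (List.mem_map_of_mem (f := ω) hj)
    have hconst : ω j = List.replicate (ω j).length a := by
      refine List.eq_replicate_of_mem (fun x hx => ?_)
      have := hsub.subset hx
      rw [htail] at this
      exact List.eq_of_mem_replicate this
    by_contra hne
    have hji : j ≠ i := fun e => hne (by rw [e])
    rcases le_total (ω j).length (ω i).length with hle | hle
    · exact hC.prefixCode.2 j i hji (by
        rw [hconst, h]
        exact replicate_prefix_replicate a (by rw [h] at hle; simpa using hle))
    · exact hC.prefixCode.2 i j (Ne.symm hji) (by
        rw [hconst, h]
        exact replicate_prefix_replicate a (by rw [h] at hle; simpa using hle))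
  have hmap : l'.map ω = List.replicate l'.length (List.replicate m a) := by
    refine List.eq_replicate_iff.mpr ⟨by simp, fun w hw => ?_⟩
    obtain ⟨j, hj, rfl⟩ := List.mem_map.mp hw
    rw [hall j hj, h]
  have hlen2 : L * m - 1 = l'.length * m := by
    have := congrArg List.length htail
    rw [hmap, replicate_flatten] at this
    simp at this
    omega
  have hpos : 1 ≤ L * m := Nat.one_le_iff_ne_zero.mpr (by positivity)
  have hdvd : m ∣ 1 := by
    have h1 : L * m - l'.length * m = 1 := by omega
    have := Nat.dvd_sub (Dvd.intro_left L rfl : m ∣ L * m) (Dvd.intro_left l'.length rfl : m ∣ l'.length * m)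
    rwa [h1] at this
  exact hm1 (by have := Nat.dvd_one.mp hdvd; omega)

/-- If `X_A` has a fixed point `a^∞`, then the constant word `a^m`
belongs to a right Markov code iff `m = 1`. -/
theorem fixed_point_code_word {N M : ℕ} (A : Mat N)
    (hA : IrreducibleMat A) (hnp : ¬ IsPermMat A)
    (ω : Fin M → List (Fin N)) (hC : IsRightMarkovCode A ω)
    (a : Fin N) (ha : A a a = true) :
    ∀ m : ℕ, (∃ i, ω i = List.replicate m a) ↔ m = 1 := by
  intro m
  constructor
  · rintro ⟨i, hi⟩
    exact const_code_word_len_one A ω hC a ha i m hi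
  · rintro rfl
    -- K bounds all code word lengths
    set K : ℕ := Finset.univ.sup (fun i => (ω i).length) with hK
    set γ : List (Fin N) := List.replicate (K + 1) a with hγ
    obtain ⟨η, hadm, l, hl, _⟩ := hC.uniqueFact γ (admX_replicate A a ha _)
    have hlne : l ≠ [] := by
      intro h0
      rw [h0] at hl
      simp at hl
      have := congrArg List.length hl.1
      simp [hγ] at this
    obtain ⟨j, t, rfl⟩ := List.exists_cons_of_ne_nil hlne
    have hpre : ω j <+: γ ++ η := by
      refine ⟨(t.map ω).flatten, ?_⟩
      rw [hl]; simp
    have hlenle : (ω j).length ≤ γ.length := by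
      have : (ω j).length ≤ K := Finset.le_sup (f := fun i => (ω i).length)
        (Finset.mem_univ j)
      simp [hγ]; omega
    have hpreγ : ω j <+: γ :=
      List.prefix_of_prefix_length_le hpre (List.prefix_append γ η) hlenle
    have hconst : ω j = List.replicate (ω j).length a :=
      eq_replicate_of_prefix_replicate (hγ ▸ hpreγ)
    have h1 : (ω j).length = 1 :=
      const_code_word_len_one A ω hC a ha j (ω j).length hconst
    exact ⟨j, by rw [hconst, h1]⟩

end TMS
end

section
/- Let C = {ω(1),...,ω(M)} be a right Markov code for (X_A, σ_A), and let A(C) be the M×M matrix with A(C)(i,j) = 1 iff ω(i)ω(j) is admissible. Then the standard coding map h_C : X_A → X_{A(C)}, sending x = ω(i_1)ω(i_2)⋯ (its unique factorization) to (i_1, i_2, ...), is a well-defined homeomorphism. -/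
namespace TMS

section Dev
variable {N M : ℕ}

/-- prefix of a sequence -/
def pre (x : ℕ → Fin N) (n : ℕ) : List (Fin N) := List.ofFn fun i : Fin n => x i

def drop' (a : ℕ) (x : ℕ → Fin N) : ℕ → Fin N := fun k => x (a + k)

@[simp] lemma length_pre (x : ℕ → Fin N) (n : ℕ) : (pre x n).length = n := by simp [pre]

lemma getElem_pre (x : ℕ → Fin N) (n i : ℕ) (h : i < (pre x n).length) :
    (pre x n)[i] = x i := by simp [pre]

lemma begins_pre (x : ℕ → Fin N) (n : ℕ) : Begins x (pre x n) := by
  intro i h; simp [List.get_eq_getElem, getElem_pre]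

lemma begins_eq_pre {x : ℕ → Fin N} {w : List (Fin N)} (h : Begins x w) :
    w = pre x w.length := by
  apply List.ext_getElem (by simp)
  intro i h1 h2
  rw [getElem_pre]
  exact ((h i h1).trans List.get_eq_getElem).symm

lemma pre_succ (x : ℕ → Fin N) (n : ℕ) : pre x (n+1) = (pre x n).concat (x n) := by
  show List.ofFn _ = _
  rw [List.ofFn_succ']
  simp [pre]

lemma pre_add (x : ℕ → Fin N) (a b : ℕ) :
    pre x (a + b) = pre x a ++ pre (drop' a x) b := by
  induction b with
  | zero => simp [pre]
  | succ b ih =>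
    rw [← Nat.add_assoc, pre_succ, ih, pre_succ]
    simp [List.concat_eq_append, drop']

lemma pre_prefix_pre (x : ℕ → Fin N) {a b : ℕ} (h : a ≤ b) : pre x a <+: pre x b := by
  rw [← Nat.add_sub_cancel' h, pre_add]
  exact List.prefix_append _ _

lemma begins_of_prefix {x : ℕ → Fin N} {w v : List (Fin N)} (hw : Begins x w)
    (h : v <+: w) : Begins x v := by
  intro i hi
  have h2 := hw i (lt_of_lt_of_le hi h.length_le)
  simp only [List.get_eq_getElem] at h2 ⊢
  rw [h.getElem hi]
  exact h2


variable {A : Mat N} {ω : Fin M → List (Fin N)}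

/-- concatenation of blocks indexed by a finite tuple -/
def blocksF (ω : Fin M → List (Fin N)) {n : ℕ} (v : Fin n → Fin M) : List (Fin N) :=
  ((List.ofFn v).map ω).flatten

/-- concatenation of the first `n` blocks -/
def blocks (ω : Fin M → List (Fin N)) (f : ℕ → Fin M) (n : ℕ) : List (Fin N) :=
  blocksF ω (fun i : Fin n => f i)

lemma blocks_succ (f : ℕ → Fin M) (n : ℕ) :
    blocks ω f (n+1) = blocks ω f n ++ ω (f n) := by
  show ((List.ofFn _).map ω).flatten = _
  rw [List.ofFn_succ']
  simp [blocks, blocksF, List.concat_eq_append]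

@[simp] lemma length_blocks (f : ℕ → Fin M) (n : ℕ) :
    (blocks ω f n).length = pos ω f n := by
  induction n with
  | zero => rfl
  | succ n ih => rw [blocks_succ, List.length_append, ih]; rfl

lemma blocks_prefix (f : ℕ → Fin M) {n m : ℕ} (h : n ≤ m) :
    blocks ω f n <+: blocks ω f m := by
  induction m with
  | zero => rw [Nat.le_zero.mp h]
  | succ m ih =>
    rcases Nat.lt_or_ge n (m+1) with h1 | h1
    · exact (ih (Nat.lt_succ_iff.mp h1)).trans (by rw [blocks_succ]; exact List.prefix_append _ _)
    · rw [Nat.le_antisymm h h1]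

lemma length_blocksF_ge (hne : ∀ i, ω i ≠ []) {n : ℕ} (v : Fin n → Fin M) :
    n ≤ (blocksF ω v).length := by
  induction n with
  | zero => exact Nat.zero_le _
  | succ n ih =>
    rw [blocksF, List.ofFn_succ]
    simp only [List.map_cons, List.flatten_cons, List.length_append]
    have h1 : 1 ≤ (ω (v 0)).length := List.length_pos_iff.mpr (hne _)
    have h2 := ih (fun i => v i.succ)
    rw [blocksF] at h2
    omega

lemma pos_le (hne : ∀ i, ω i ≠ []) (f : ℕ → Fin M) (n : ℕ) : n ≤ pos ω f n := by
  rw [← length_blocks]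
  exact length_blocksF_ge hne _

/-- the infinite concatenation, on a finite window -/
def concF (ω : Fin M → List (Fin N)) (hne : ∀ i, ω i ≠ []) {k : ℕ}
    (v : Fin (k+1) → Fin M) : Fin N :=
  (blocksF ω v).get ⟨k, lt_of_lt_of_le (Nat.lt_succ_self k) (length_blocksF_ge hne v)⟩

/-- the infinite concatenation -/
def conc (ω : Fin M → List (Fin N)) (hne : ∀ i, ω i ≠ []) (f : ℕ → Fin M) (k : ℕ) : Fin N :=
  concF ω hne (fun i : Fin (k+1) => f i)

lemma conc_eq_get (hne : ∀ i, ω i ≠ []) (f : ℕ → Fin M) {k m : ℕ}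
    (hk : k < (blocks ω f m).length) :
    conc ω hne f k = (blocks ω f m).get ⟨k, hk⟩ := by
  have hk' : k < (blocks ω f (k+1)).length := by
    rw [length_blocks]; exact lt_of_lt_of_le (Nat.lt_succ_self k) (pos_le hne f (k+1))
  show (blocks ω f (k+1)).get ⟨k, hk'⟩ = _
  simp only [List.get_eq_getElem]
  rcases Nat.le_total (k+1) m with h | h
  · exact (blocks_prefix f h).getElem hk'
  · exact ((blocks_prefix f h).getElem hk).symm

lemma factors_conc (hne : ∀ i, ω i ≠ []) (f : ℕ → Fin M) :
    Factors ω (conc ω hne f) f := by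
  intro n i hi
  have hlen : pos ω f n + i < (blocks ω f (n+1)).length := by
    rw [length_blocks]; show _ < pos ω f n + (ω (f n)).length; omega
  show conc ω hne f (pos ω f n + i) = _
  rw [conc_eq_get hne f hlen]
  simp only [List.get_eq_getElem]
  rw [List.getElem_of_eq (blocks_succ f n) hlen,
    List.getElem_append_right (by rw [length_blocks]; omega)]
  congr 1
  rw [length_blocks]
  omega


lemma adm_of_begins {x : ℕ → Fin N} (hx : x ∈ SSpace A) {w : List (Fin N)}
    (hb : Begins x w) : Adm A w := by
  rw [Adm]; unfold List.Chain'; rw [List.isChain_iff_getElem]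
  intro i h
  have e1 := hb i (by omega)
  have e2 := hb (i+1) (by omega)
  simp only [List.get_eq_getElem] at e1 e2
  rw [← e1, ← e2]
  exact hx i

lemma drop_mem {x : ℕ → Fin N} (hx : x ∈ SSpace A) (a : ℕ) : drop' a x ∈ SSpace A := by
  intro n
  show A (x (a + n)) (x (a + (n+1))) = true
  rw [← Nat.add_assoc]
  exact hx (a + n)

lemma begins_append {x : ℕ → Fin N} {u v : List (Fin N)} (h1 : Begins x u)
    (h2 : Begins (drop' u.length x) v) : Begins x (u ++ v) := by
  intro i hi
  simp only [List.get_eq_getElem]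
  rcases Nat.lt_or_ge i u.length with h | h
  · rw [List.getElem_append_left h]
    exact (h1 i h).trans List.get_eq_getElem
  · rw [List.getElem_append_right h]
    have h3 : i - u.length < v.length := by
      have := hi; simp only [List.length_append] at this; omega
    have := h2 (i - u.length) h3
    simp only [List.get_eq_getElem] at this
    rw [← this]
    show x i = x (u.length + (i - u.length))
    congr 1
    omega

lemma pos_succ_shift (f : ℕ → Fin M) (n : ℕ) :
    pos ω f (n+1) = (ω (f 0)).length + pos ω (fun k => f (k+1)) n := by
  induction n with
  | zero => show pos ω f 0 + _ = _ + pos ω _ 0; simp [pos]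
  | succ n ih =>
    show pos ω f (n+1) + (ω (f (n+1))).length = _ + (pos ω _ n + _)
    rw [ih]; ring

lemma factors_begins {x : ℕ → Fin N} {f : ℕ → Fin M} (hf : Factors ω x f) :
    Begins x (ω (f 0)) := by
  intro i h
  have := hf 0 i h
  simpa [show pos ω f 0 = 0 from rfl] using this

lemma factors_drop {x : ℕ → Fin N} {f : ℕ → Fin M} (hf : Factors ω x f) :
    Factors ω (drop' (ω (f 0)).length x) (fun k => f (k+1)) := by
  intro n i h
  have := hf (n+1) i h
  simp only [pos_succ_shift] at this
  rw [← this]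
  show x ((ω (f 0)).length + (pos ω _ n + i)) = x (_ + i)
  congr 1
  omega

lemma exists_block (hne : ∀ i, ω i ≠ []) (f : ℕ → Fin M) (k : ℕ) :
    ∃ n, pos ω f n ≤ k ∧ k < pos ω f (n+1) := by
  induction k with
  | zero =>
    refine ⟨0, le_refl _, ?_⟩
    show 0 < pos ω f 0 + (ω (f 0)).length
    have := List.length_pos_iff.mpr (hne (f 0))
    simp [pos]; omega
  | succ k ih =>
    obtain ⟨n, h1, h2⟩ := ih
    rcases Nat.lt_or_ge (k+1) (pos ω f (n+1)) with h | h
    · exact ⟨n, by omega, h⟩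
    · refine ⟨n+1, h, ?_⟩
      show k + 1 < pos ω f (n+1) + (ω (f (n+1))).length
      have := List.length_pos_iff.mpr (hne (f (n+1)))
      omega

lemma factors_ext (hne : ∀ i, ω i ≠ []) {x y : ℕ → Fin N} {f : ℕ → Fin M}
    (hx : Factors ω x f) (hy : Factors ω y f) : x = y := by
  funext k
  obtain ⟨n, h1, h2⟩ := exists_block hne f k
  have h3 : k - pos ω f n < (ω (f n)).length := by
    have : pos ω f (n+1) = pos ω f n + (ω (f n)).length := rfl
    omega
  have e1 := hx n (k - pos ω f n) h3
  have e2 := hy n (k - pos ω f n) h3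
  simp only at e1 e2
  rw [Nat.add_sub_cancel' h1] at e1 e2
  rw [e1, e2]


lemma begins_unique (hC : IsRightMarkovCode A ω) {x : ℕ → Fin N} {i j : Fin M}
    (hi : Begins x (ω i)) (hj : Begins x (ω j)) : i = j := by
  by_contra hij
  rcases Nat.le_total (ω i).length (ω j).length with h | h
  · refine hC.prefixCode.2 i j hij ?_
    rw [begins_eq_pre hi, begins_eq_pre hj]
    simpa using pre_prefix_pre x h
  · refine hC.prefixCode.2 j i (Ne.symm hij) ?_
    rw [begins_eq_pre hi, begins_eq_pre hj]
    simpa using pre_prefix_pre x h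

lemma factors_unique_apply (hC : IsRightMarkovCode A ω) :
    ∀ (n : ℕ) {x : ℕ → Fin N} {f g : ℕ → Fin M},
      Factors ω x f → Factors ω x g → f n = g n
  | 0, x, f, g, hf, hg => begins_unique hC (factors_begins hf) (factors_begins hg)
  | n+1, x, f, g, hf, hg => by
      have h0 : f 0 = g 0 := begins_unique hC (factors_begins hf) (factors_begins hg)
      have hf' := factors_drop hf
      have hg' := factors_drop hg
      rw [h0] at hf'
      exact factors_unique_apply hC n hf' hg'

lemma factors_unique (hC : IsRightMarkovCode A ω) {x : ℕ → Fin N} {f g : ℕ → Fin M}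
    (hf : Factors ω x f) (hg : Factors ω x g) : f = g :=
  funext fun n => factors_unique_apply hC n hf hg

/-- every prefix of `x` extends to a concatenation of code words -/
def QF (ω : Fin M → List (Fin N)) (x : ℕ → Fin N) : Prop :=
  ∀ n, ∃ l : List (Fin M), pre x n <+: (l.map ω).flatten

lemma QF_of_mem (hC : IsRightMarkovCode A ω) {x : ℕ → Fin N} (hx : x ∈ SSpace A) :
    QF ω x := by
  intro n
  obtain ⟨η, _, l, hl, _⟩ := hC.uniqueFact (pre x n) ⟨x, hx, begins_pre x n⟩
  exact ⟨l, η, hl⟩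

/-- maximal word length -/
def maxLen (ω : Fin M → List (Fin N)) : ℕ := Finset.univ.sup fun i => (ω i).length

lemma len_le_maxLen (i : Fin M) : (ω i).length ≤ maxLen ω :=
  Finset.le_sup (f := fun i => (ω i).length) (Finset.mem_univ i)

lemma first_of_prefix {x : ℕ → Fin N} {l : List (Fin M)} {m : ℕ}
    (hm : maxLen ω < m) (hpre : pre x m <+: (l.map ω).flatten) :
    ∃ i t, l = i :: t ∧ Begins x (ω i) := by
  cases l with
  | nil =>
    exfalso
    have := hpre.length_le
    simp at this
    omega
  | cons i t =>
    refine ⟨i, t, rfl, ?_⟩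
    have h1 : ω i <+: ((i :: t).map ω).flatten := by
      simp only [List.map_cons, List.flatten_cons]
      exact List.prefix_append _ _
    have h2 : ω i <+: pre x m :=
      List.prefix_of_prefix_length_le h1 hpre
        (by rw [length_pre]; exact le_of_lt (lt_of_le_of_lt (len_le_maxLen i) hm))
    exact begins_of_prefix (begins_pre x m) h2

lemma exists_first {x : ℕ → Fin N} (hQ : QF ω x) : ∃ i : Fin M, Begins x (ω i) := by
  obtain ⟨l, hpre⟩ := hQ (maxLen ω + 1)
  obtain ⟨i, t, _, hb⟩ := first_of_prefix (Nat.lt_succ_self _) hpre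
  exact ⟨i, hb⟩

lemma QF_drop (hC : IsRightMarkovCode A ω) {x : ℕ → Fin N} (hQ : QF ω x) {i : Fin M}
    (hi : Begins x (ω i)) : QF ω (drop' (ω i).length x) := by
  intro n
  set a := (ω i).length with ha
  set m := maxLen ω + 1 + (a + n) with hm
  obtain ⟨l, hpre⟩ := hQ m
  obtain ⟨j, t, rfl, hj⟩ := first_of_prefix (by omega) hpre
  have hji : j = i := begins_unique hC hj hi
  subst hji
  have hxm : pre x m = ω j ++ pre (drop' a x) (m - a) := by
    have h1 : m = a + (m - a) := by omega
    rw [h1, pre_add, ← begins_eq_pre hi, Nat.add_sub_cancel_left]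
  rw [hxm] at hpre
  simp only [List.map_cons, List.flatten_cons] at hpre
  rw [List.prefix_append_right_inj] at hpre
  refine ⟨t, (pre_prefix_pre _ (show n ≤ m - a by omega)).trans hpre⟩


/-- the first code word index of a factorizable point -/
noncomputable def fIdx {x : ℕ → Fin N} (hQ : QF ω x) : Fin M :=
  (exists_first hQ).choose

lemma fIdx_spec {x : ℕ → Fin N} (hQ : QF ω x) : Begins x (ω (fIdx hQ)) :=
  (exists_first hQ).choose_spec

/-- the factorization sequence of a point -/
noncomputable def fac (hC : IsRightMarkovCode A ω) :
    (n : ℕ) → (x : ℕ → Fin N) → QF ω x → Fin M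
  | 0, _, hQ => fIdx hQ
  | n+1, x, hQ =>
      fac hC n (drop' (ω (fIdx hQ)).length x) (QF_drop hC hQ (fIdx_spec hQ))

lemma factors_fac (hC : IsRightMarkovCode A ω) :
    ∀ (n : ℕ) (x : ℕ → Fin N) (hQ : QF ω x),
      Begins (fun k => x (pos ω (fun m => fac hC m x hQ) n + k)) (ω (fac hC n x hQ))
  | 0, x, hQ => by
      intro i h
      simpa [fac, show pos ω (fun m => fac hC m x hQ) 0 = 0 from rfl] using fIdx_spec hQ i h
  | n+1, x, hQ => by
      intro i h
      set y := drop' (ω (fIdx hQ)).length x with hy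
      set hQ' := QF_drop hC hQ (fIdx_spec hQ) with hQ'd
      have hfs : (fun m => fac hC m x hQ) ∘ Nat.succ = fun m => fac hC m y hQ' := rfl
      have hps : pos ω (fun m => fac hC m x hQ) (n+1)
          = (ω (fIdx hQ)).length + pos ω (fun m => fac hC m y hQ') n := by
        rw [pos_succ_shift]
        rfl
      have := factors_fac hC n y hQ' i h
      show x (pos ω (fun m => fac hC m x hQ) (n+1) + i) = _
      rw [hps]
      have heq : x ((ω (fIdx hQ)).length + pos ω (fun m => fac hC m y hQ') n + i)
          = y (pos ω (fun m => fac hC m y hQ') n + i) := by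
        show x _ = x ((ω (fIdx hQ)).length + (pos ω (fun m => fac hC m y hQ') n + i))
        rw [Nat.add_assoc]
      rw [heq]
      exact this

lemma factors_fac' (hC : IsRightMarkovCode A ω) {x : ℕ → Fin N} (hQ : QF ω x) :
    Factors ω x (fun n => fac hC n x hQ) :=
  fun n => factors_fac hC n x hQ

/-- membership of the factorization sequence in the induced shift space -/
lemma fac_mem (hC : IsRightMarkovCode A ω) {x : ℕ → Fin N} (hx : x ∈ SSpace A)
    {f : ℕ → Fin M} (hf : Factors ω x f) : f ∈ SSpace (matC A ω) := by
  intro n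
  rw [matC, decide_eq_true_iff]
  have b1 : Begins (drop' (pos ω f n) x) (ω (f n)) := hf n
  have b2 : Begins (drop' (ω (f n)).length (drop' (pos ω f n) x)) (ω (f (n+1))) := by
    have := hf (n+1)
    intro i hi
    have h2 := this i hi
    simp only at h2
    rw [← h2]
    show x (pos ω f n + ((ω (f n)).length + i)) = x (pos ω f (n+1) + i)
    congr 1
    show _ = pos ω f n + (ω (f n)).length + i
    omega
  exact adm_of_begins (drop_mem hx _) (begins_append b1 b2)


lemma adm_single (hC : IsRightMarkovCode A ω) (i : Fin M) : Adm A (ω i) := by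
  obtain ⟨x, hx, hb⟩ := hC.adm i
  exact adm_of_begins hx hb

lemma adm_glue {u v w : List (Fin N)} (hv : v ≠ []) (h1 : Adm A (u ++ v))
    (h2 : Adm A (v ++ w)) : Adm A (u ++ (v ++ w)) := by
  rw [Adm] at h1 ⊢; unfold List.Chain' at h1 ⊢; rw [List.isChain_append] at h1 ⊢
  refine ⟨h1.1, h2, ?_⟩
  intro a ha b hb
  apply h1.2.2 a ha
  cases v with
  | nil => exact absurd rfl hv
  | cons c v' =>
    simp only [List.cons_append, List.head?_cons] at hb ⊢
    exact hb

lemma chain_adm (hC : IsRightMarkovCode A ω) :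
    ∀ (t : List (Fin M)) (i : Fin M),
      List.Chain' (fun a b => matC A ω a b = true) (i :: t) →
      Adm A (ω i ++ (t.map ω).flatten)
  | [], i, _ => by simpa using adm_single hC i
  | j :: t, i, hch => by
    unfold List.Chain' at hch; rw [List.isChain_cons_cons] at hch
    have hij : Adm A (ω i ++ ω j) := by
      have := hch.1
      rwa [matC, decide_eq_true_iff] at this
    have ht := chain_adm hC t j hch.2
    have := adm_glue (hC.ne j) hij ht
    simp only [List.map_cons, List.flatten_cons]
    exact this

lemma chain_ofFn {f : ℕ → Fin M} (hf : f ∈ SSpace (matC A ω)) (m : ℕ) :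
    List.Chain' (fun a b => matC A ω a b = true) (List.ofFn fun i : Fin m => f i) := by
  unfold List.Chain'; rw [List.isChain_iff_getElem]
  intro i h
  simp only [List.getElem_ofFn]
  simpa using hf i

lemma adm_blocks (hC : IsRightMarkovCode A ω) {f : ℕ → Fin M}
    (hf : f ∈ SSpace (matC A ω)) (m : ℕ) : Adm A (blocks ω f (m+1)) := by
  have h := chain_ofFn hf (m+1)
  rw [List.ofFn_succ] at h
  show Adm A (((List.ofFn fun i : Fin (m+1) => f i).map ω).flatten)
  rw [List.ofFn_succ, List.map_cons, List.flatten_cons]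
  exact chain_adm hC _ _ h

lemma conc_mem (hC : IsRightMarkovCode A ω) {f : ℕ → Fin M}
    (hf : f ∈ SSpace (matC A ω)) : conc ω hC.ne f ∈ SSpace A := by
  intro k
  have hadm := adm_blocks hC hf (k+1)
  rw [Adm] at hadm; unfold List.Chain' at hadm; rw [List.isChain_iff_getElem] at hadm
  have hk2 : k + 2 ≤ pos ω f (k+1+1) := pos_le hC.ne f (k+1+1)
  have h1 : k < (blocks ω f (k+1+1)).length := by rw [length_blocks]; omega
  have h2 : k + 1 < (blocks ω f (k+1+1)).length := by rw [length_blocks]; omega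
  have := hadm k (by rw [length_blocks]; omega)
  rw [conc_eq_get hC.ne f h1, conc_eq_get hC.ne f h2]
  simp only [List.get_eq_getElem]
  exact this

lemma cont_conc (hne : ∀ i, ω i ≠ []) :
    Continuous fun f : ℕ → Fin M => conc ω hne f := by
  apply continuous_pi
  intro k
  have : (fun f : ℕ → Fin M => conc ω hne f k)
      = (fun v : Fin (k+1) → Fin M => concF ω hne v) ∘ fun f (i : Fin (k+1)) => f i := rfl
  rw [this]
  exact continuous_of_discreteTopology.comp (continuous_pi fun i => continuous_apply _)

lemma isClosed_SSpace {M : ℕ} (B : Mat M) : IsClosed (SSpace B) := by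
  have hset : SSpace B = ⋂ n, (fun x : ℕ → Fin M => B (x n) (x (n+1))) ⁻¹' {true} := by
    ext x
    simp [SSpace, Set.mem_iInter]
  rw [hset]
  refine isClosed_iInter fun n => IsClosed.preimage ?_ isClosed_singleton
  have : (fun x : ℕ → Fin M => B (x n) (x (n+1)))
      = (fun p : Fin M × Fin M => B p.1 p.2) ∘ fun x => (x n, x (n+1)) := rfl
  rw [this]
  exact continuous_of_discreteTopology.comp ((continuous_apply n).prodMk (continuous_apply (n+1)))

end Dev


/-- The standard coding map `h_C : X_A → X_{A(C)}`, sending a point to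
the index sequence of its unique factorization, is a well-defined homeomorphism. -/
theorem standard_coding_homeomorphism {N M : ℕ} (A : Mat N)
    (hA : IrreducibleMat A) (hnp : ¬ IsPermMat A)
    (ω : Fin M → List (Fin N)) (hC : IsRightMarkovCode A ω) :
    ∃ h : ↥(SSpace A) ≃ₜ ↥(SSpace (matC A ω)),
      ∀ (x : ↥(SSpace A)) (f : ℕ → Fin M), Factors ω x.1 f → (h x).1 = f := by
  classical
  have hne := hC.ne
  let F : ↥(SSpace A) → ℕ → Fin M := fun x n => fac hC n x.1 (QF_of_mem hC x.2)
  have hF : ∀ x : ↥(SSpace A), Factors ω x.1 (F x) := fun x => factors_fac' hC _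
  let E : ↥(SSpace (matC A ω)) ≃ ↥(SSpace A) :=
    { toFun := fun f => ⟨conc ω hne f.1, conc_mem hC f.2⟩
      invFun := fun x => ⟨F x, fac_mem hC x.2 (hF x)⟩
      left_inv := fun f => by
        apply Subtype.ext
        exact factors_unique hC (hF ⟨conc ω hne f.1, conc_mem hC f.2⟩) (factors_conc hne f.1)
      right_inv := fun x => by
        apply Subtype.ext
        exact factors_ext hne (factors_conc hne (F x)) (hF x) }
  have hcont : Continuous ⇑E :=
    Continuous.subtype_mk ((cont_conc hne).comp continuous_subtype_val) _
  haveI : CompactSpace ↥(SSpace (matC A ω)) :=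
    isCompact_iff_compactSpace.mp (isClosed_SSpace (matC A ω)).isCompact
  let H : ↥(SSpace (matC A ω)) ≃ₜ ↥(SSpace A) := hcont.homeoOfEquivCompactToT2
  refine ⟨H.symm, ?_⟩
  intro x f hf
  have h1 : (H.symm x).1 = F x := rfl
  rw [h1]
  exact factors_unique hC (hF x) hf

end TMS
end

section
/- Let C be a prefix code for X_A with the unique factorization property and let K_0 = max length of words in C. Then for every x ∈ X_A and every n, the first n code words in the factorizations of sufficiently long finite prefixes of x (extended to admissible factorizable words) stabilize, i.e., if x_{[1,m]}η factors as ω(i_1)⋯ω(i_k) and x_{[1,m']}η' factors as ω(j_1)⋯ω(j_{k'}) with m, m' ≥ nK_0, then i_p = j_p for p = 1,...,n. -/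
namespace TMS

/-- Key lemma: if the flattenings of two code-word lists agree on a prefix of
length `n·K₀` (and both are at least that long), then the first `n` code words
agree. -/
theorem key_stabilize {N M K₀ : ℕ} (ω : Fin M → List (Fin N))
    (hne : ∀ i, ω i ≠ []) (hpc : IsPrefixCode ω)
    (hKb : ∀ i, (ω i).length ≤ K₀) :
    ∀ n (l l' : List (Fin M)),
      ((l.map ω).flatten).take (n * K₀) = ((l'.map ω).flatten).take (n * K₀) →
      n * K₀ ≤ ((l.map ω).flatten).length →
      n * K₀ ≤ ((l'.map ω).flatten).length →
      ∀ p < n, l[p]? = l'[p]? := by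
  intro n
  induction n with
  | zero => intro l l' _ _ _ p hp; exact absurd hp (Nat.not_lt_zero p)
  | succ n ih =>
    intro l l' htake hl hl' p hp
    match l, l' with
    | [], [] => simp
    | [], j :: ls' =>
      exfalso
      simp only [List.map_nil, List.flatten_nil, List.length_nil, Nat.le_zero] at hl
      have hK0 : K₀ = 0 := by
        rcases Nat.mul_eq_zero.mp hl with h | h
        · exact absurd h (Nat.succ_ne_zero n)
        · exact h
      have := hKb j
      rw [hK0, Nat.le_zero, List.length_eq_zero_iff] at this
      exact hne j this
    | i :: ls, [] =>
      exfalso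
      simp only [List.map_nil, List.flatten_nil, List.length_nil, Nat.le_zero] at hl'
      have hK0 : K₀ = 0 := by
        rcases Nat.mul_eq_zero.mp hl' with h | h
        · exact absurd h (Nat.succ_ne_zero n)
        · exact h
      have := hKb i
      rw [hK0, Nat.le_zero, List.length_eq_zero_iff] at this
      exact hne i this
    | i :: ls, j :: ls' =>
      simp only [List.map_cons, List.flatten_cons] at htake hl hl'
      have hiT : (ω i).length ≤ (n + 1) * K₀ := by
        have := hKb i; nlinarith
      have hjT : (ω j).length ≤ (n + 1) * K₀ := by
        have := hKb j; nlinarith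
      -- ω i and ω j are both prefixes of the common take
      have hpi : ω i <+: ((ω i ++ (ls.map ω).flatten).take ((n + 1) * K₀)) := by
        rw [List.prefix_take_iff]
        exact ⟨List.prefix_append _ _, hiT⟩
      have hpj : ω j <+: ((ω i ++ (ls.map ω).flatten).take ((n + 1) * K₀)) := by
        rw [htake, List.prefix_take_iff]
        exact ⟨List.prefix_append _ _, hjT⟩
      have hij : i = j := by
        by_contra hij
        rcases List.prefix_or_prefix_of_prefix hpi hpj with h | h
        · exact hpc.2 i j hij h
        · exact hpc.2 j i (Ne.symm hij) h
      subst hij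
      match p, hp with
      | 0, _ => simp
      | (q + 1), hp =>
        simp only [List.getElem?_cons_succ]
        have hk : (ω i).length + n * K₀ ≤ (n + 1) * K₀ := by
          have := hKb i; nlinarith
        have hdrop :
            ((ls.map ω).flatten).take (n * K₀) = ((ls'.map ω).flatten).take (n * K₀) := by
          have h1 := congrArg (fun t => (t.drop (ω i).length).take (n * K₀)) htake
          simpa [List.drop_take, List.drop_left, List.take_take,
            Nat.min_eq_left (by omega : n * K₀ ≤ (n + 1) * K₀ - (ω i).length)] using h1
        refine ih ls ls' hdrop ?_ ?_ q (by omega)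
        · rw [List.length_append] at hl; omega
        · rw [List.length_append] at hl'; omega

/-- For a prefix code with the unique factorization property and
`K₀` the maximal word length, the first `n` code words in factorizations of
extended prefixes of length at least `n·K₀` of a point stabilize. -/
theorem prefix_factorizations_stabilize {N M K₀ : ℕ} (A : Mat N)
    (ω : Fin M → List (Fin N)) (hne : ∀ i, ω i ≠ []) (hpc : IsPrefixCode ω)
    (hufp : ∀ γ, AdmX A γ → ∃ η, AdmX A (γ ++ η) ∧
        ∃! l : List (Fin M), γ ++ η = (l.map ω).flatten)
    (hK : K₀ = Finset.univ.sup fun i => (ω i).length)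
    (x : ℕ → Fin N) (hx : x ∈ SSpace A)
    (n m m' : ℕ) (hm : n * K₀ ≤ m) (hm' : n * K₀ ≤ m')
    (η η' : List (Fin N)) (l l' : List (Fin M))
    (hfac : (List.ofFn fun i : Fin m => x i.1) ++ η = (l.map ω).flatten)
    (hfac' : (List.ofFn fun i : Fin m' => x i.1) ++ η' = (l'.map ω).flatten) :
    ∀ p < n, l[p]? = l'[p]? := by
  have hKb : ∀ i, (ω i).length ≤ K₀ := fun i => hK ▸ Finset.le_sup (f := fun i => (ω i).length) (Finset.mem_univ i)
  have hofn : ((List.ofFn fun i : Fin m => x i.1).take (n * K₀))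
      = ((List.ofFn fun i : Fin m' => x i.1).take (n * K₀)) := by
    apply List.ext_getElem
    · simp [Nat.min_eq_left hm, Nat.min_eq_left hm']
    · intro k h1 h2
      simp [List.getElem_take, List.getElem_ofFn]
  have htake : ((l.map ω).flatten).take (n * K₀) = ((l'.map ω).flatten).take (n * K₀) := by
    rw [← hfac, ← hfac',
      List.take_append_of_le_length (by simpa using hm),
      List.take_append_of_le_length (by simpa using hm'), hofn]
  have hlen : n * K₀ ≤ ((l.map ω).flatten).length := by
    rw [← hfac, List.length_append, List.length_ofFn]; omega
  have hlen' : n * K₀ ≤ ((l'.map ω).flatten).length := by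
    rw [← hfac', List.length_append, List.length_ofFn]; omega
  exact key_stabilize ω hne hpc hKb n l l' htake hlen hlen'

end TMS
end
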